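/- Let U be a commutative K-algebra and ∂₁,…,∂ₙ pairwise commuting K-linear derivations of U. Then the K-module A = (Fin n → U) of formal vector fields Σᵢ uᵢ∂ᵢ, with the bilinear multiplication determined by (u∂ᵢ)∘(v∂ⱼ) = v·∂ⱼ(u)·∂ᵢ (i.e., (f∘g)ᵢ = Σⱼ gⱼ·∂ⱼ(fᵢ)), satisfies the right-symmetric identity (a∘b)∘c − a∘(b∘c) = (a∘c)∘b − a∘(c∘b) for all a,b,c ∈ A. (This is the half-Witt algebra Wₙ^{rsym}.) -/
import Mathlib


open Finset

/-- The multiplication of the half-Witt algebra `Wₙ^{rsym}`: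
`(u∂ᵢ)∘(v∂ⱼ) = v·∂ⱼ(u)·∂ᵢ`, i.e. `(f∘g)ᵢ = Σⱼ gⱼ·∂ⱼ(fᵢ)`. -/
def wittMul {K U : Type*} [CommRing K] [CommRing U] [Algebra K U]
    (n : ℕ) (D : Fin n → U →ₗ[K] U) (f g : Fin n → U) : Fin n → U :=
  fun i => ∑ j, g j * D j (f i)

/-- The half-Witt algebra `Wₙ^{rsym}` of formal vector fields is right-symmetric. -/
theorem wittMul_rightSymmetric
    {K U : Type*} [CommRing K] [CommRing U] [Algebra K U]
    (n : ℕ) (D : Fin n → U →ₗ[K] U)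
    (hleib : ∀ (i : Fin n) (u v : U), D i (u * v) = D i u * v + u * D i v)
    (hcomm : ∀ (i j : Fin n) (u : U), D i (D j u) = D j (D i u)) :
    ∀ a b c : Fin n → U,
      wittMul n D (wittMul n D a b) c - wittMul n D a (wittMul n D b c)
        = wittMul n D (wittMul n D a c) b - wittMul n D a (wittMul n D c b) := by
  intro a b c
  funext i
  have key : ∀ b c : Fin n → U,
      wittMul n D (wittMul n D a b) c i - wittMul n D a (wittMul n D b c) i
        = ∑ k, ∑ j, c k * b j * D k (D j (a i)) := by
    intro b c
    have h1 : wittMul n D (wittMul n D a b) c i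
        = ∑ k, ∑ j, (c k * D k (b j) * D j (a i) + c k * b j * D k (D j (a i))) := by
      simp only [wittMul, map_sum, hleib, Finset.mul_sum]
      exact Finset.sum_congr rfl fun k _ => Finset.sum_congr rfl fun j _ => by ring
    have h2 : wittMul n D a (wittMul n D b c) i
        = ∑ k, ∑ j, c k * D k (b j) * D j (a i) := by
      simp only [wittMul, Finset.sum_mul]
      rw [Finset.sum_comm]
    rw [h1, h2]
    simp [Finset.sum_add_distrib]
  rw [Pi.sub_apply, Pi.sub_apply, key b c, key c b]
  rw [Finset.sum_comm]
  exact Finset.sum_congr rfl fun k _ => Finset.sum_congr rfl fun j _ => by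
    rw [hcomm]; ring
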